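/- Under the stated hypotheses, the cyclic code C of length n over F with defining set of exponents Z = L ∪ D has dimension exactly k as an F-vector space. -/

import Mathlib

set_option maxHeartbeats 1000000


/-- The cyclic code of length `n` with defining set of exponents `Z`:
codewords have entries in the field `K`, and parity checks are computed in
the field `F` via the ring homomorphism `φ`, using powers of `α`. -/
def cyclicCode {K F : Type*} [Field K] [Field F] (φ : K →+* F) (n : ℕ) (α : F)
    (Z : Set ℕ) : Submodule K (Fin n → K) where
  carrier := {c | ∀ z ∈ Z, ∑ i : Fin n, φ (c i) * α ^ ((i : ℕ) * z) = 0}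
  add_mem' := by
    intro a b ha hb z hz
    have h : (∑ i : Fin n, φ ((a + b) i) * α ^ ((i : ℕ) * z))
        = (∑ i : Fin n, φ (a i) * α ^ ((i : ℕ) * z))
          + ∑ i : Fin n, φ (b i) * α ^ ((i : ℕ) * z) := by
      rw [← Finset.sum_add_distrib]
      refine Finset.sum_congr rfl fun i _ => ?_
      simp [add_mul]
    rw [h, ha z hz, hb z hz, add_zero]
  zero_mem' := by intro z hz; simp
  smul_mem' := by
    intro c a ha z hz
    have h : (∑ i : Fin n, φ ((c • a) i) * α ^ ((i : ℕ) * z))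
        = φ c * ∑ i : Fin n, φ (a i) * α ^ ((i : ℕ) * z) := by
      rw [Finset.mul_sum]
      refine Finset.sum_congr rfl fun i _ => ?_
      simp [mul_assoc]
    rw [h, ha z hz, mul_zero]

/-- The dual of a code: all vectors orthogonal to every codeword. -/
def dualCode {K : Type*} [Field K] {n : ℕ} (C : Set (Fin n → K)) : Set (Fin n → K) :=
  {x | ∀ c ∈ C, ∑ i : Fin n, x i * c i = 0}

/-- A linear code is LCD if its intersection with its dual is `{0}`. -/
def IsLCD {K : Type*} [Field K] {n : ℕ} (C : Submodule K (Fin n → K)) : Prop :=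
  (C : Set (Fin n → K)) ∩ dualCode (C : Set (Fin n → K)) = {0}

/-- A code has locality `r` if every coordinate position `i` is recoverable as a fixed
linear combination of at most `r` other coordinate positions, uniformly over all codewords. -/
def HasLocality {K : Type*} [Field K] {n : ℕ} (C : Set (Fin n → K)) (r : ℕ) : Prop :=
  ∀ i : Fin n, ∃ (R : Finset (Fin n)) (lam : Fin n → K),
    i ∉ R ∧ R.card ≤ r ∧ ∀ c ∈ C, c i = ∑ j ∈ R, lam j * c j

/-- The `q`-cyclotomic coset of `a` modulo `n`:
`[a] = {a·q^j mod n : j = 0, 1, 2, …}` (natural number version). -/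
def cycCoset (q n a : ℕ) : Set ℕ := {b | ∃ j : ℕ, b = a * q ^ j % n}


lemma arith_main (n k r t a : ℕ) (hk : 0 < k) (hr : 0 < r) (hrk : r ≤ k)
    (hr1n : r + 1 ∣ n) (hkn : k * (r + 1) ≤ n * r)
    (ht : t = (n * r - k * (r + 1)) / (2 * r)) (ha : a = t % (r + 1))
    (hdvd : (2 * (r : ℤ)) ∣ ((n * r / (r + 1) : ℕ) : ℤ) - (k : ℤ) - 2 * (a : ℤ)) :
    ∃ n' q : ℕ, n = (r + 1) * n' ∧ t = (r + 1) * q + a ∧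
      r * n' = 2 * a + 2 * (r * q) + k ∧ a < r ∧ 2 * t + r < n ∧ k < n := by
  obtain ⟨n', hn'⟩ := hr1n
  set q := t / (r + 1) with hq
  have h1 : (r + 1) * q + a = t := by rw [ha, hq]; exact Nat.div_add_mod t (r+1)
  have h2 : a < r + 1 := by rw [ha]; exact Nat.mod_lt _ (by omega)
  set e := (n * r - k * (r + 1)) % (2 * r) with he
  have hE : 2 * r * t + e = n * r - k * (r + 1) := by rw [ht, he]; exact Nat.div_add_mod _ _
  have heb : e < 2 * r := by rw [he]; exact Nat.mod_lt _ (by omega)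
  clear_value q e
  have hEZ : 2 * (r:ℤ) * t + e + k * (r + 1) = n * r := by
    have h3 : 2 * r * t + e + k * (r + 1) = n * r := by omega
    exact_mod_cast congrArg (Nat.cast : ℕ → ℤ) h3
  have hnZ : (n : ℤ) = (r + 1) * n' := by exact_mod_cast hn'
  have htZ : ((r:ℤ) + 1) * q + a = t := by exact_mod_cast h1
  have hquot : n * r / (r + 1) = n' * r := by
    rw [hn', mul_assoc]; exact Nat.mul_div_cancel_left _ (by omega)
  rw [hquot] at hdvd
  obtain ⟨s, hs⟩ := hdvd
  push_cast at hs
  have hrZ : (1:ℤ) ≤ r := by exact_mod_cast hr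
  have haZ : (a:ℤ) < r + 1 := by exact_mod_cast h2
  have haZ0 : (0:ℤ) ≤ a := Int.ofNat_nonneg a
  have heZ : (e:ℤ) < 2 * r := by exact_mod_cast heb
  have heZ0 : (0:ℤ) ≤ e := Int.ofNat_nonneg e
  have hkey : 2 * (r:ℤ) * (r + 1) * ((q:ℤ) - s) = 2 * a - e := by
    linear_combination hEZ + 2*(r:ℤ)*htZ + ((r:ℤ)+1)*hs + (r:ℤ)*hnZ
  have habs : 2 * (a:ℤ) - e = 0 := by
    refine Int.eq_zero_of_abs_lt_dvd ⟨(q:ℤ) - s, hkey.symm⟩ ?_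
    rw [abs_lt]
    constructor <;> nlinarith
  have hqs : (q:ℤ) = s := by
    have hpos : (0:ℤ) < 2 * (r:ℤ) * (r + 1) := by positivity
    have h0 : 2 * (r:ℤ) * (r + 1) * ((q:ℤ) - s) = 0 := by rw [hkey]; exact habs
    rcases mul_eq_zero.mp h0 with h | h
    · exact absurd h (ne_of_gt hpos)
    · linarith
  have h3Z : (r:ℤ) * n' = 2 * a + 2 * ((r:ℤ) * q) + k := by
    linear_combination hs - 2*(r:ℤ)*hqs
  have hear : a < r := by
    have he2 : e = 2 * a := by exact_mod_cast (by linarith [habs] : (e:ℤ) = 2 * a)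
    omega
  have hn0 : 0 < n := by
    rcases Nat.eq_zero_or_pos n with h | h
    · subst h; simp at hkn; omega
    · exact h
  have hrkZ : (r:ℤ) ≤ k := by exact_mod_cast hrk
  have h5 : ((2 * t + r : ℕ) : ℤ) < n := by
    have hkr1 : (r:ℤ) * (r + 1) ≤ k * (r + 1) := by
      have : (0:ℤ) ≤ (r:ℤ) + 1 := by linarith
      exact mul_le_mul_of_nonneg_right hrkZ this
    have h5' : (r:ℤ) * (2 * t + r) < r * n := by linarith [hkr1, hEZ, habs, heZ0, haZ0, hrZ]
    have := lt_of_mul_lt_mul_left h5' (by linarith : (0:ℤ) ≤ r)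
    push_cast
    linarith
  have h6 : k < n := by
    have hknZ : (k:ℤ) * (r + 1) ≤ n * r := by exact_mod_cast hkn
    have hnn : (1:ℤ) ≤ n := by exact_mod_cast hn0
    have h6' : (k:ℤ) * (r + 1) < n * (r + 1) := by linarith [hknZ, hnn, hrZ]
    have := lt_of_mul_lt_mul_right h6' (by linarith : (0:ℤ) ≤ (r:ℤ) + 1)
    exact_mod_cast this
  exact ⟨n', q, hn', by omega, by exact_mod_cast h3Z, hear, by exact_mod_cast h5, h6⟩


lemma count_main (n k r t a n' q : ℕ) (hr : 1 ≤ r)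
    (P1 : n = r * n' + n') (P2 : t = r * q + q + a) (P3 : r * n' = 2 * a + 2 * (r * q) + k)
    (P4 : a < r) (P5 : 2 * t + r < n) :
    ((Finset.range n).filter (fun j => ¬((r + 1) ∣ j ∨ j ≤ t ∨ n ≤ j + t))).card = k := by
  have ring1 : (r + 1) * q = r * q + q := by ring
  have ring2 : (r + 1) * n' = r * n' + n' := by ring
  have hq1 : 2 * q < n' := by
    by_contra hcon
    push_neg at hcon
    have h := Nat.mul_le_mul_left (r + 1) hcon
    have ring3 : (r + 1) * (2 * q) = 2 * (r * q) + 2 * q := by ring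
    omega
  set b := n - t - 1 with hbdef
  set c := n' - q - 1 with hcdef
  have hb : b + (t + 1) = n := by omega
  have hc : c + (q + 1) = n' := by omega
  obtain ⟨d, hd⟩ : ∃ d, d + a = r := ⟨r - a, by omega⟩
  have hbc : b = (r + 1) * c + d := by
    have h1 : (r + 1) * (c + (q + 1)) = (r + 1) * n' := by rw [hc]
    have h2 : (r + 1) * (c + (q + 1)) = (r + 1) * c + (r + 1) * q + (r + 1) := by ring
    omega
  have div1 : t / (r + 1) = q := by
    have : t = (r + 1) * q + a := by omega
    rw [this, Nat.mul_add_div (by omega), Nat.div_eq_of_lt (by omega), add_zero]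
  have div2 : b / (r + 1) = c := by
    rw [hbc, Nat.mul_add_div (by omega), Nat.div_eq_of_lt (by omega), add_zero]
  have hset : (Finset.range n).filter (fun j => ¬((r + 1) ∣ j ∨ j ≤ t ∨ n ≤ j + t))
      = (Finset.Ioc t b).filter (fun j => ¬ (r + 1) ∣ j) := by
    ext j
    simp only [Finset.mem_filter, Finset.mem_range, Finset.mem_Ioc, not_or, not_le]
    constructor
    · rintro ⟨h1, h2, h3, h4⟩
      exact ⟨⟨h3, by omega⟩, h2⟩
    · rintro ⟨⟨h1, h2⟩, h3⟩
      exact ⟨by omega, h3, h1, by omega⟩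
  have hts : t ≤ b := by omega
  have hsub : (Finset.Ioc 0 t).filter ((r + 1) ∣ ·) ⊆ (Finset.Ioc 0 b).filter ((r + 1) ∣ ·) :=
    Finset.filter_subset_filter _ (Finset.Ioc_subset_Ioc_right hts)
  have hsd : (Finset.Ioc t b).filter ((r + 1) ∣ ·)
      = (Finset.Ioc 0 b).filter ((r + 1) ∣ ·) \ (Finset.Ioc 0 t).filter ((r + 1) ∣ ·) := by
    ext j
    simp only [Finset.mem_filter, Finset.mem_sdiff, Finset.mem_Ioc]
    constructor
    · rintro ⟨⟨h1, h2⟩, h3⟩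
      exact ⟨⟨⟨by omega, h2⟩, h3⟩, fun hcon => by omega⟩
    · rintro ⟨⟨⟨h0, h2⟩, h3⟩, h4⟩
      have h5 : t < j := by
        by_contra hle
        exact h4 ⟨⟨h0, by omega⟩, h3⟩
      exact ⟨⟨h5, h2⟩, h3⟩
  have hdvdcard : ((Finset.Ioc t b).filter ((r + 1) ∣ ·)).card = c - q := by
    rw [hsd, Finset.card_sdiff_of_subset hsub, Nat.Ioc_filter_dvd_card_eq_div,
      Nat.Ioc_filter_dvd_card_eq_div, div1, div2]
  have htotal := Finset.card_filter_add_card_filter_not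
    (s := Finset.Ioc t b) (p := ((r + 1) ∣ ·))
  rw [hset]
  have hcard : (Finset.Ioc t b).card = b - t := Nat.card_Ioc t b
  have hcq : q ≤ c := by omega
  omega

theorem stmt16 (F : Type*) [Field F] [Fintype F]
    (n k r : ℕ)
    (hn : 0 < n) (hk : 0 < k) (hr : 0 < r) (hrk : r ≤ k)
    (α : F) (hα : orderOf α = n)
    (hr1n : r + 1 ∣ n) (hkn : k * (r + 1) ≤ n * r)
    (t a : ℕ) (ht : t = (n * r - k * (r + 1)) / (2 * r)) (ha : a = t % (r + 1))
    (hdvd : (2 * (r : ℤ)) ∣ ((n * r / (r + 1) : ℕ) : ℤ) - (k : ℤ) - 2 * (a : ℤ))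
    (L D : Set ℕ)
    (hL : L = {i | i < n ∧ (r + 1) ∣ i})
    (hD : D = {d : ℕ | ∃ s : ℤ, -(t : ℤ) ≤ s ∧ s ≤ (t : ℤ) ∧ (d : ℤ) = s % (n : ℤ)})
    : Module.finrank F (cyclicCode (RingHom.id F) n α (L ∪ D)) = k := by
  classical
  subst hL hD
  obtain ⟨n', q, hn', htq, hkey, har, htn, hkn'⟩ :=
    arith_main n k r t a hk hr hrk hr1n hkn ht ha hdvd
  set L : Set ℕ := {i | i < n ∧ (r + 1) ∣ i} with hL
  set D : Set ℕ := {d : ℕ | ∃ s : ℤ, -(t : ℤ) ≤ s ∧ s ≤ (t : ℤ) ∧ (d : ℤ) = s % (n : ℤ)} with hD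
  have htn2 : t < n := by omega
  -- characterize membership in Z for naturals below n
  have hmem : ∀ m : ℕ, m < n → (m ∈ L ∪ D ↔ ((r + 1) ∣ m ∨ m ≤ t ∨ n ≤ m + t)) := by
    intro m hm
    constructor
    · rintro (hz | hz)
      · exact Or.inl hz.2
      · obtain ⟨s, hs1, hs2, hs3⟩ := hz
        rcases le_or_gt 0 s with hs0 | hs0
        · have h1 : s % (n : ℤ) = s := Int.emod_eq_of_lt hs0 (by
            have : (t : ℤ) < n := by exact_mod_cast htn2
            omega)
          refine Or.inr (Or.inl ?_)
          have : (m : ℤ) ≤ t := by omega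
          exact_mod_cast this
        · have h1 : s % (n : ℤ) = s + n := by
            have h2 : (s + n) % (n : ℤ) = s % n := by
              simpa using Int.add_mul_emod_self_left (a := s) (b := (n : ℤ)) (c := 1)
            rw [← h2]
            refine Int.emod_eq_of_lt (by omega) (by omega)
          refine Or.inr (Or.inr ?_)
          have : (n : ℤ) ≤ (m : ℤ) + t := by omega
          exact_mod_cast this
    · rintro (hz | hz | hz)
      · exact Or.inl ⟨hm, hz⟩
      · refine Or.inr ⟨(m : ℤ), by omega, by exact_mod_cast hz, ?_⟩
        rw [Int.emod_eq_of_lt (by positivity) (by exact_mod_cast hm)]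
      · refine Or.inr ⟨(m : ℤ) - n, ?_, ?_, ?_⟩
        · have h1 : (n : ℤ) ≤ (m : ℤ) + t := by exact_mod_cast hz
          omega
        · have h1 : (m : ℤ) < n := by exact_mod_cast hm
          omega
        · have h3 : ((m : ℤ) - n) % n = (m : ℤ) % n := by
            rw [Int.sub_emod, Int.emod_self, sub_zero, Int.emod_emod_of_dvd _ dvd_rfl]
          rw [h3, Int.emod_eq_of_lt (by positivity) (by exact_mod_cast hm)]
  -- the defining Finset
  set S : Finset (Fin n) := Finset.univ.filter (fun j : Fin n => ((j : ℕ) ∈ L ∪ D)) with hS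
  have hcompl : (Finset.univ.filter (fun j : Fin n => ¬((j : ℕ) ∈ L ∪ D))).card = k := by
    have hbij : (Finset.univ.filter (fun j : Fin n => ¬((j : ℕ) ∈ L ∪ D))).card
        = ((Finset.range n).filter (fun m => ¬((r + 1) ∣ m ∨ m ≤ t ∨ n ≤ m + t))).card := by
      apply Finset.card_bij (fun (j : Fin n) _ => (j : ℕ))
      · intro j hj
        simp only [Finset.mem_filter, Finset.mem_univ, true_and] at hj
        simp only [Finset.mem_filter, Finset.mem_range]
        exact ⟨j.isLt, fun hcon => hj ((hmem j j.isLt).mpr hcon)⟩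
      · intro i _ j _ hij
        exact Fin.ext hij
      · intro m hm
        simp only [Finset.mem_filter, Finset.mem_range] at hm
        refine ⟨⟨m, hm.1⟩, ?_, rfl⟩
        simp only [Finset.mem_filter, Finset.mem_univ, true_and]
        exact fun hcon => hm.2 ((hmem m hm.1).mp hcon)
    rw [hbij]
    have hb1 : (r + 1) * n' = r * n' + n' := by ring
    have hb2 : (r + 1) * q = r * q + q := by ring
    exact count_main n k r t a n' q hr (by omega) (by omega) hkey har htn
  have hScard : S.card + k = n := by
    have := Finset.card_filter_add_card_filter_not
      (s := (Finset.univ : Finset (Fin n))) (p := fun j : Fin n => ((j : ℕ) ∈ L ∪ D))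
    rw [hcompl] at this
    rw [Finset.card_univ, Fintype.card_fin] at this
    exact this
  -- Vandermonde linear algebra
  set w : Fin n → F := fun j => α ^ (j : ℕ) with hwdef
  have hw : Function.Injective w := by
    intro i j hij
    refine Fin.ext (pow_injOn_Iio_orderOf ?_ ?_ hij)
    · simp [hα, i.isLt]
    · simp [hα, j.isLt]
  have hdet : IsUnit (Matrix.vandermonde w).det :=
    (Matrix.det_vandermonde_ne_zero_iff.mpr hw).isUnit
  letI hinv : Invertible (Matrix.vandermonde w) := Matrix.invertibleOfIsUnitDet _ hdet
  set E : (Fin n → F) ≃ₗ[F] (Fin n → F) := (Matrix.vandermonde w).toLinearEquiv' hinv with hE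
  have hEapp : ∀ (v : Fin n → F) (j : Fin n),
      E v j = ∑ i : Fin n, v i * α ^ ((i : ℕ) * (j : ℕ)) := by
    intro v j
    have h1 : E v = (Matrix.vandermonde w).mulVec v := by
      rw [hE]
      rfl
    rw [h1, Matrix.mulVec, dotProduct]
    refine Finset.sum_congr rfl fun i _ => ?_
    rw [Matrix.vandermonde_apply, hwdef]
    rw [← pow_mul, mul_comm ((j : ℕ)) ((i : ℕ)), mul_comm]
  set W : Submodule F (Fin n → F) :=
    LinearMap.ker (LinearMap.funLeft F F ((↑) : {j : Fin n // j ∈ S} → Fin n)) with hW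
  have hCW : cyclicCode (RingHom.id F) n α (L ∪ D)
      = W.comap (E : (Fin n → F) →ₗ[F] (Fin n → F)) := by
    ext v
    have hv : v ∈ cyclicCode (RingHom.id F) n α (L ∪ D)
        ↔ ∀ z ∈ L ∪ D, ∑ i : Fin n, v i * α ^ ((i : ℕ) * z) = 0 := Iff.rfl
    rw [hv, Submodule.mem_comap, hW, LinearMap.mem_ker]
    have hfun : LinearMap.funLeft F F ((↑) : {j : Fin n // j ∈ S} → Fin n)
        ((E : (Fin n → F) →ₗ[F] (Fin n → F)) v) = 0
        ↔ ∀ x : {j : Fin n // j ∈ S}, E v (x : Fin n) = 0 := by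
      rw [funext_iff]
      simp [LinearMap.funLeft_apply]
    rw [hfun]
    constructor
    · intro h x
      rw [hEapp]
      have hx : ((x : Fin n) : ℕ) ∈ L ∪ D := (Finset.mem_filter.mp x.2).2
      exact h _ hx
    · intro h z hz
      have hzlt : z < n := by
        rcases hz with hz | hz
        · exact hz.1
        · obtain ⟨s, _, _, hs3⟩ := hz
          have h1 : s % (n : ℤ) < n := Int.emod_lt_of_pos s (by exact_mod_cast hn)
          have h2 : (z : ℤ) < n := by omega
          exact_mod_cast h2
      have hj : (⟨z, hzlt⟩ : Fin n) ∈ S :=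
        Finset.mem_filter.mpr ⟨Finset.mem_univ _, hz⟩
      have := h ⟨⟨z, hzlt⟩, hj⟩
      rw [hEapp] at this
      exact this
  rw [hCW, Submodule.comap_equiv_eq_map_symm, LinearEquiv.finrank_map_eq, hW]
  have hsurj : Function.Surjective (LinearMap.funLeft F F ((↑) : {j : Fin n // j ∈ S} → Fin n)) :=
    LinearMap.funLeft_surjective_of_injective _ _ _ Subtype.val_injective
  have hrank := LinearMap.finrank_range_add_finrank_ker
    (LinearMap.funLeft F F ((↑) : {j : Fin n // j ∈ S} → Fin n))
  rw [LinearMap.range_eq_top.mpr hsurj, finrank_top] at hrank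
  rw [Module.finrank_pi, Module.finrank_pi, Fintype.card_coe, Fintype.card_fin] at hrank
  omega
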